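/- arXiv:1105.3862 — 2 statements merged into one kernel-verified Lean document; each statement's English description precedes it below -/
import Mathlib

section
/- Let m be even and let T : Ω̂_m → {0,1}^{m/2} be the bijection T(ω_1,…,ω_m) = (f(ω_1,ω_2), f(ω_3,ω_4), …, f(ω_{m−1},ω_m)) where f(1,0) = 1 and f(0,1) = 0. Then for all increasing events A, B ⊆ {0,1}^m, T((A □ B) ∩ Ω̂_m) ⊆ T(A ∩ Ω̂_m) □ T(B ∩ Ω̂_m), where the □ on the right is the disjoint-occurrence operation on {0,1}^{m/2}. -/
open scoped Classical

/-- The cylinder `[ω]_S`: all configurations agreeing with `ω` on `S`. -/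
def cyl {ι : Type*} (ω : ι → Bool) (S : Finset ι) : Set (ι → Bool) :=
  {α | ∀ i ∈ S, α i = ω i}

/-- Disjoint occurrence `A □ B`. -/
def boxOp {ι : Type*} (A B : Set (ι → Bool)) : Set (ι → Bool) :=
  {ω | ∃ K L : Finset ι, Disjoint K L ∧ cyl ω K ⊆ A ∧ cyl ω L ⊆ B}

/-- An increasing event. -/
def IsIncreasing {ι : Type*} (A : Set (ι → Bool)) : Prop :=
  ∀ ⦃ω ω' : ι → Bool⦄, ω ∈ A → (∀ i, ω i ≤ ω' i) → ω' ∈ A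

/-- Number of coordinates equal to 1 (`true`). -/
def ones {ι : Type*} [Fintype ι] (ω : ι → Bool) : ℕ :=
  (Finset.univ.filter fun i => ω i = true).card

/-- The probability of an event `A` under the weight function `μ`. -/
noncomputable def mass {ι : Type*} [Fintype ι] [DecidableEq ι]
    (μ : (ι → Bool) → ℝ) (A : Set (ι → Bool)) : ℝ :=
  ∑ ω : ι → Bool, if ω ∈ A then μ ω else 0

/-- The uniform probability weight on a set `S` of configurations, `0` elsewhere. -/
noncomputable def uniformOn {ι : Type*} (S : Set (ι → Bool)) : (ι → Bool) → ℝ :=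
  fun ω => if ω ∈ S then ((S.ncard : ℝ))⁻¹ else 0

/-- The `k`-out-of-`n` measure: uniform on configurations with exactly `k` ones. -/
noncomputable def kOutOf (n k : ℕ) : (Fin n → Bool) → ℝ :=
  uniformOn {ω : Fin n → Bool | ones ω = k}

/-- Coordinatewise flip `ω̄`. -/
def flipC {ι : Type*} (ω : ι → Bool) : ι → Bool := fun i => !ω i

/-- `Ω̂_m`: configurations whose consecutive pairs `(ω_{2i-1}, ω_{2i})`
(0-based: indices `2j` and `2j+1`) are `(1,0)` or `(0,1)`. -/
def hatOmega (m : ℕ) : Set (Fin m → Bool) :=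
  {ω | ∀ j : ℕ, ∀ h : 2 * j + 1 < m, ω ⟨2 * j, by omega⟩ ≠ ω ⟨2 * j + 1, h⟩}

/-- The encoding bijection `T : Ω̂_m → {0,1}^{m/2}`: on `Ω̂_m`, `f(1,0) = 1` and
`f(0,1) = 0`, i.e. `T ω j` is the first coordinate of the `j`-th pair. -/
def Tmap (m : ℕ) (ω : Fin m → Bool) : Fin (m / 2) → Bool :=
  fun j => ω ⟨2 * j.val, by have := j.isLt; omega⟩

lemma cyl_filter_subset {m : ℕ} {A : Set (Fin m → Bool)} (hA : IsIncreasing A)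
    {ω : Fin m → Bool} {K : Finset (Fin m)} (hK : cyl ω K ⊆ A) :
    cyl ω (K.filter fun i => ω i = true) ⊆ A := by
  intro α hα
  have h1 : (fun i => if i ∈ K then ω i else α i) ∈ cyl ω K := by
    intro i hi; simp [hi]
  refine hA (hK h1) ?_
  intro i
  by_cases hi : i ∈ K
  · simp only [hi, if_true]
    by_cases hωi : ω i = true
    · have : α i = ω i := hα i (Finset.mem_filter.mpr ⟨hi, hωi⟩)
      simp [this]
    · simp only [Bool.not_eq_true] at hωi
      simp [hωi]
  · simp [hi]

lemma key_subset {m : ℕ} (hm2 : m % 2 = 0) {A : Set (Fin m → Bool)}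
    {ω : Fin m → Bool} (hω : ω ∈ hatOmega m) {K : Finset (Fin m)}
    (hK : cyl ω K ⊆ A) :
    cyl (Tmap m ω) (Finset.univ.filter fun j : Fin (m / 2) =>
      (⟨2 * j.val, by have := j.isLt; omega⟩ : Fin m) ∈ K ∨
      (⟨2 * j.val + 1, by have := j.isLt; omega⟩ : Fin m) ∈ K) ⊆
    Tmap m '' (A ∩ hatOmega m) := by
  intro τ hτ
  classical
  set β : Fin m → Bool := fun i =>
    if i.val % 2 = 0 then τ ⟨i.val / 2, by have := i.isLt; omega⟩
    else !τ ⟨i.val / 2, by have := i.isLt; omega⟩ with hβdef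
  have hβΩ : β ∈ hatOmega m := by
    intro j h
    have e0 : (2 * j) % 2 = 0 := by omega
    have e1 : (2 * j + 1) % 2 = 1 := by omega
    have d0 : (2 * j) / 2 = j := by omega
    have d1 : (2 * j + 1) / 2 = j := by omega
    simp only [hβdef, e0, e1, if_true, if_false]
    have hj2 : j < m / 2 := by omega
    have : (⟨(2 * j) / 2, by omega⟩ : Fin (m / 2)) = ⟨(2 * j + 1) / 2, by omega⟩ := by
      exact Fin.ext (by simp only [Fin.val_mk]; omega)
    rw [this]
    simp
  have hβA : β ∈ A := by
    apply hK
    intro i hi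
    have hi2 : i.val / 2 < m / 2 := by have := i.isLt; omega
    set j : Fin (m / 2) := ⟨i.val / 2, hi2⟩ with hjdef
    by_cases hpar : i.val % 2 = 0
    · have he : (⟨2 * j.val, by have := j.isLt; omega⟩ : Fin m) = i :=
        Fin.ext (by simp [hjdef]; omega)
      have hjK : j ∈ Finset.univ.filter fun j : Fin (m / 2) =>
          (⟨2 * j.val, by have := j.isLt; omega⟩ : Fin m) ∈ K ∨
          (⟨2 * j.val + 1, by have := j.isLt; omega⟩ : Fin m) ∈ K := by
        refine Finset.mem_filter.mpr ⟨Finset.mem_univ _, Or.inl ?_⟩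
        rw [he]; exact hi
      have hτj : τ j = Tmap m ω j := hτ j hjK
      have : β i = τ j := by simp [hβdef, hpar, hjdef]
      rw [this, hτj, Tmap, he]
    · have hpar1 : i.val % 2 = 1 := by omega
      have he : (⟨2 * j.val + 1, by have := j.isLt; omega⟩ : Fin m) = i :=
        Fin.ext (by simp [hjdef]; omega)
      have hjK : j ∈ Finset.univ.filter fun j : Fin (m / 2) =>
          (⟨2 * j.val, by have := j.isLt; omega⟩ : Fin m) ∈ K ∨
          (⟨2 * j.val + 1, by have := j.isLt; omega⟩ : Fin m) ∈ K := by
        refine Finset.mem_filter.mpr ⟨Finset.mem_univ _, Or.inr ?_⟩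
        rw [he]; exact hi
      have hτj : τ j = Tmap m ω j := hτ j hjK
      have hb : β i = !τ j := by simp [hβdef, hpar1, hjdef]
      have hne := hω j.val (by have := j.isLt; omega)
      rw [hb, hτj]
      have hωi : ω ⟨2 * j.val + 1, by have := j.isLt; omega⟩ = ω i := by rw [he]
      rw [Tmap]
      revert hne hωi
      cases ω ⟨2 * ↑j, by have := j.isLt; omega⟩ <;>
        cases ω ⟨2 * ↑j + 1, by have := j.isLt; omega⟩ <;> simp_all
  refine ⟨β, ⟨hβA, hβΩ⟩, ?_⟩
  funext j
  have e0 : (2 * j.val) % 2 = 0 := by omega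
  have d0 : (2 * j.val) / 2 = j.val := by omega
  simp only [Tmap, hβdef, e0, if_true]
  congr 1
  exact Fin.ext (by simp only [Fin.val_mk]; omega)

/-- `T((A □ B) ∩ Ω̂_m) ⊆ T(A ∩ Ω̂_m) □ T(B ∩ Ω̂_m)` for increasing `A, B`. -/
theorem Tmap_box_subset (m : ℕ) (hm : Even m)
    (A B : Set (Fin m → Bool)) (hA : IsIncreasing A) (hB : IsIncreasing B) :
    Tmap m '' ((boxOp A B) ∩ hatOmega m) ⊆
      boxOp (Tmap m '' (A ∩ hatOmega m)) (Tmap m '' (B ∩ hatOmega m)) := by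
  have hm2 : m % 2 = 0 := Nat.even_iff.mp hm
  rintro τ ⟨ω, ⟨⟨K, L, hKL, hKA, hLB⟩, hω⟩, rfl⟩
  classical
  set K₁ := K.filter fun i => ω i = true with hK₁def
  set L₁ := L.filter fun i => ω i = true with hL₁def
  have hK₁ : cyl ω K₁ ⊆ A := cyl_filter_subset hA hKA
  have hL₁ : cyl ω L₁ ⊆ B := cyl_filter_subset hB hLB
  refine ⟨_, _, ?_, key_subset hm2 hω hK₁, key_subset hm2 hω hL₁⟩
  rw [Finset.disjoint_left]
  intro j hj hj'
  simp only [Finset.mem_filter, Finset.mem_univ, true_and] at hj hj'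
  have hdisj : ∀ i : Fin m, i ∈ K₁ → i ∉ L₁ := by
    intro i hiK hiL
    exact Finset.disjoint_left.mp hKL (Finset.mem_filter.mp hiK).1
      (Finset.mem_filter.mp hiL).1
  have htrueK : ∀ i : Fin m, i ∈ K₁ → ω i = true := fun i hi =>
    (Finset.mem_filter.mp hi).2
  have htrueL : ∀ i : Fin m, i ∈ L₁ → ω i = true := fun i hi =>
    (Finset.mem_filter.mp hi).2
  have hne := hω j.val (by have := j.isLt; omega)
  rcases hj with h0 | h1 <;> rcases hj' with h0' | h1'
  · exact hdisj _ h0 h0'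
  · exact hne (by rw [htrueK _ h0, htrueL _ h1'])
  · exact hne (by rw [htrueL _ h0', htrueK _ h1])
  · exact hdisj _ h1 h1'
end

section
/- The BK property is preserved under projections: if μ is a probability measure on {0,1}^{n+m} such that μ(A □ B) ≤ μ(A)μ(B) for all increasing events A, B ⊆ {0,1}^{n+m}, then its marginal ν on {0,1}^n (the pushforward of μ under the projection onto the first n coordinates) satisfies ν(A' □ B') ≤ ν(A')ν(B') for all increasing events A', B' ⊆ {0,1}^n. -/
open scoped Classical

/-- The marginal on the first `n` coordinates of a weight function on `{0,1}^{n+m}`. -/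
noncomputable def marginal (n m : ℕ) (μ : (Fin (n + m) → Bool) → ℝ) :
    (Fin n → Bool) → ℝ :=
  fun x => mass μ {ω | ∀ i : Fin n, ω (Fin.castAdd m i) = x i}

/-- The BK property is preserved under projection onto the first `n` coordinates. -/
theorem bk_preserved_under_projection (n m : ℕ) (μ : (Fin (n + m) → Bool) → ℝ)
    (hpos : ∀ ω, 0 ≤ μ ω) (hsum : (∑ ω : Fin (n + m) → Bool, μ ω) = 1)
    (hBK : ∀ A B : Set (Fin (n + m) → Bool), IsIncreasing A → IsIncreasing B →
      mass μ (boxOp A B) ≤ mass μ A * mass μ B)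
    (A' B' : Set (Fin n → Bool)) (hA' : IsIncreasing A') (hB' : IsIncreasing B') :
    mass (marginal n m μ) (boxOp A' B') ≤
      mass (marginal n m μ) A' * mass (marginal n m μ) B' := by
  set π : (Fin (n + m) → Bool) → (Fin n → Bool) := fun ω i => ω (Fin.castAdd m i) with hπ
  -- mass of marginal equals mass of preimage
  have hmass : ∀ S' : Set (Fin n → Bool),
      mass (marginal n m μ) S' = mass μ (π ⁻¹' S') := by
    intro S'
    calc mass (marginal n m μ) S'
        = ∑ x : Fin n → Bool, ∑ ω : Fin (n + m) → Bool,
            if x ∈ S' ∧ x = π ω then μ ω else 0 := by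
          unfold mass marginal mass
          apply Finset.sum_congr rfl
          intro x _
          split_ifs with h
          · apply Finset.sum_congr rfl
            intro ω _
            have : (ω ∈ {ω | ∀ i : Fin n, ω (Fin.castAdd m i) = x i}) ↔ (x = π ω) := by
              constructor
              · intro hh; funext i; exact (hh i).symm
              · intro hh i; rw [hh]
            simp [this, h]
          · simp [h]
      _ = ∑ ω : Fin (n + m) → Bool, ∑ x : Fin n → Bool,
            if x = π ω then (if x ∈ S' then μ ω else 0) else 0 := by
          rw [Finset.sum_comm]
          apply Finset.sum_congr rfl; intro ω _
          apply Finset.sum_congr rfl; intro x _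
          by_cases h1 : x = π ω <;> by_cases h2 : x ∈ S' <;> simp [h1, h2]
      _ = ∑ ω : Fin (n + m) → Bool, if ω ∈ π ⁻¹' S' then μ ω else 0 := by
          apply Finset.sum_congr rfl; intro ω _
          rw [Finset.sum_ite_eq' Finset.univ (π ω)]
          simp [Set.mem_preimage]
      _ = mass μ (π ⁻¹' S') := by unfold mass; rfl
  have hmono : ∀ S T : Set (Fin (n + m) → Bool), S ⊆ T → mass μ S ≤ mass μ T := by
    intro S T hST
    unfold mass
    apply Finset.sum_le_sum
    intro ω _
    split_ifs with h1 h2 h2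
    · exact le_rfl
    · exact absurd (hST h1) h2
    · exact hpos ω
    · exact le_rfl
  set A : Set (Fin (n + m) → Bool) := π ⁻¹' A' with hA
  set B : Set (Fin (n + m) → Bool) := π ⁻¹' B' with hB
  have hAinc : IsIncreasing A := fun ω ω' h hle => hA' h (fun i => hle _)
  have hBinc : IsIncreasing B := fun ω ω' h hle => hB' h (fun i => hle _)
  -- embedding
  have hinj : Function.Injective (Fin.castAdd m : Fin n → Fin (n + m)) := by
    intro a b h
    exact Fin.ext (by simpa using congrArg Fin.val h)
  set e : Fin n ↪ Fin (n + m) := ⟨Fin.castAdd m, hinj⟩ with he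
  have hbox : π ⁻¹' (boxOp A' B') ⊆ boxOp A B := by
    rintro ω ⟨K, L, hKL, hK, hL⟩
    refine ⟨K.map e, L.map e, Finset.disjoint_map e |>.mpr hKL, ?_, ?_⟩
    · intro α hα
      apply hK
      intro i hi
      exact hα (e i) (Finset.mem_map_of_mem e hi)
    · intro α hα
      apply hL
      intro i hi
      exact hα (e i) (Finset.mem_map_of_mem e hi)
  calc mass (marginal n m μ) (boxOp A' B')
      = mass μ (π ⁻¹' (boxOp A' B')) := hmass _
    _ ≤ mass μ (boxOp A B) := hmono _ _ hbox
    _ ≤ mass μ A * mass μ B := hBK A B hAinc hBinc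
    _ = mass (marginal n m μ) A' * mass (marginal n m μ) B' := by
        rw [hmass A', hmass B']
end
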